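/- For sets F₁, …, F_{k+1} ∈ S_{r,R}, the pseudo-distance d̃(E,F) = (∫_{E△F} dist(x,∂E) dx)^{1/2} satisfies the triangle-like inequality d̃²(F_{k+1}, F₁)/k ≤ C Σ_{j=1}^{k} d̃²(F_{j+1}, F_j), where the constant C depends only on r, R, and the dimension n. -/

import Mathlib

open Metric MeasureTheory

/-- `Ω` is star-shaped with respect to the ball `B_r(0)`. -/
def StarShapedWrtBall (n : ℕ) (r : ℝ) (Ω : Set (EuclideanSpace ℝ (Fin n))) : Prop :=
  ∀ y ∈ ball (0 : EuclideanSpace ℝ (Fin n)) r, ∀ x ∈ Ω, segment ℝ y x ⊆ Ω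

/-- The class `S_{r,R}`. -/
def MemSrR (n : ℕ) (r R : ℝ) (Ω : Set (EuclideanSpace ℝ (Fin n))) : Prop :=
  ball (0 : EuclideanSpace ℝ (Fin n)) r ⊆ Ω ∧
    Ω ⊆ closedBall (0 : EuclideanSpace ℝ (Fin n)) R ∧ StarShapedWrtBall n r Ω

/-- The pseudo-distance `d̃(E,F) = (∫_{E△F} dist(x,∂E) dx)^{1/2}`. -/
noncomputable def dtil (n : ℕ) (E F : Set (EuclideanSpace ℝ (Fin n))) : ℝ :=
  Real.sqrt (∫ x in symmDiff E F, infDist x (frontier E))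

namespace DtilAux

open Set

abbrev Esp (n : ℕ) := EuclideanSpace ℝ (Fin n)

/-- Star-shapedness hypothesis bundle, as in the target statement. -/
def SrR (n : ℕ) (r R : ℝ) (Ω : Set (Esp n)) : Prop :=
  ball (0 : Esp n) r ⊆ Ω ∧ Ω ⊆ closedBall (0 : Esp n) R ∧
    ∀ y ∈ ball (0 : Esp n) r, ∀ x ∈ Ω, segment ℝ y x ⊆ Ω

/-- Radial function. -/
noncomputable def uS (n : ℕ) (Ω : Set (Esp n)) (θ : sphere (0 : Esp n) 1) : ℝ :=
  sSup {t : ℝ | 0 ≤ t ∧ t • (θ : Esp n) ∈ Ω}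

variable {n : ℕ} {r R : ℝ} {Ω : Set (Esp n)}

lemma norm_coe_sphere (θ : sphere (0 : Esp n) 1) : ‖(θ : Esp n)‖ = 1 := by
  have := θ.2
  rwa [mem_sphere_zero_iff_norm] at this

lemma norm_smul_sphere (θ : sphere (0 : Esp n) 1) (t : ℝ) : ‖t • (θ : Esp n)‖ = |t| := by
  rw [norm_smul, norm_coe_sphere, Real.norm_eq_abs, mul_one]

lemma zero_mem (hr : 0 < r) (hΩ : SrR n r R Ω) : (0 : Esp n) ∈ Ω :=
  hΩ.1 (mem_ball_self hr)

lemma mem_uSset_bddAbove (hΩ : SrR n r R Ω) (θ : sphere (0 : Esp n) 1) :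
    BddAbove {t : ℝ | 0 ≤ t ∧ t • (θ : Esp n) ∈ Ω} := by
  refine ⟨R, fun s hs => ?_⟩
  have h := hΩ.2.1 hs.2
  rw [mem_closedBall, dist_zero_right, norm_smul_sphere, abs_of_nonneg hs.1] at h
  exact h

lemma le_uS (hr : 0 < r) (hΩ : SrR n r R Ω) {θ : sphere (0 : Esp n) 1} {t : ℝ}
    (ht : 0 ≤ t) (h : t • (θ : Esp n) ∈ Ω) : t ≤ uS n Ω θ :=
  le_csSup (mem_uSset_bddAbove hΩ θ) ⟨ht, h⟩

lemma uS_nonneg (hr : 0 < r) (hΩ : SrR n r R Ω) (θ : sphere (0 : Esp n) 1) :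
    0 ≤ uS n Ω θ :=
  le_uS hr hΩ le_rfl (by simpa using zero_mem hr hΩ)

lemma uSset_nonempty (hr : 0 < r) (hΩ : SrR n r R Ω) (θ : sphere (0 : Esp n) 1) :
    {t : ℝ | 0 ≤ t ∧ t • (θ : Esp n) ∈ Ω}.Nonempty :=
  ⟨0, le_rfl, by simpa using zero_mem hr hΩ⟩

lemma smul_mem_of_lt (hr : 0 < r) (hΩ : SrR n r R Ω) {θ : sphere (0 : Esp n) 1} {t : ℝ}
    (ht : 0 ≤ t) (h : t < uS n Ω θ) : t • (θ : Esp n) ∈ Ω := by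
  obtain ⟨s, hs, hts⟩ := exists_lt_of_lt_csSup (uSset_nonempty hr hΩ θ) h
  obtain ⟨hs0, hsmem⟩ := hs
  have hspos : 0 < s := lt_of_le_of_lt ht hts
  have hseg : t • (θ : Esp n) ∈ segment ℝ (0 : Esp n) (s • (θ : Esp n)) := by
    refine ⟨1 - t / s, t / s, ?_, by positivity, by ring, ?_⟩
    · rw [sub_nonneg]; exact (div_le_one hspos).mpr hts.le
    · rw [smul_zero, zero_add, smul_smul, div_mul_cancel₀ _ hspos.ne']
  exact hΩ.2.2 0 (mem_ball_self hr) _ hsmem hseg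

lemma r_le_uS (hr : 0 < r) (hΩ : SrR n r R Ω) (θ : sphere (0 : Esp n) 1) :
    r ≤ uS n Ω θ := by
  by_contra hlt
  push_neg at hlt
  have h0 : 0 ≤ uS n Ω θ := uS_nonneg hr hΩ θ
  set t := (uS n Ω θ + r) / 2 with ht
  have ht0 : 0 ≤ t := by positivity
  have htr : t < r := by rw [ht]; linarith
  have : t • (θ : Esp n) ∈ Ω := by
    apply hΩ.1
    rw [mem_ball, dist_zero_right, norm_smul_sphere, abs_of_nonneg ht0]
    exact htr
  have := le_uS hr hΩ ht0 this
  rw [ht] at this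
  linarith

lemma uS_le_R (hr : 0 < r) (hΩ : SrR n r R Ω) (θ : sphere (0 : Esp n) 1) :
    uS n Ω θ ≤ R := by
  apply csSup_le (uSset_nonempty hr hΩ θ)
  intro s hs
  have h := hΩ.2.1 hs.2
  rwa [mem_closedBall, dist_zero_right, norm_smul_sphere, abs_of_nonneg hs.1] at h

lemma uS_lipschitz_aux (hr : 0 < r) (hrR : r < R) (hΩ : SrR n r R Ω)
    (θ θ' : sphere (0 : Esp n) 1) :
    uS n Ω θ ≤ uS n Ω θ' + (2 * R ^ 2 / r) * ‖(θ : Esp n) - (θ' : Esp n)‖ := by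
  set L := 2 * R ^ 2 / r with hL
  set d := ‖(θ : Esp n) - (θ' : Esp n)‖ with hd
  have hd0 : 0 ≤ d := norm_nonneg _
  have hR0 : 0 < R := hr.trans hrR
  have hL0 : 0 < L := by positivity
  have hu' : r ≤ uS n Ω θ' := r_le_uS hr hΩ θ'
  apply csSup_le (uSset_nonempty hr hΩ θ)
  rintro t ⟨ht0, htmem⟩
  have htR : t ≤ R := by
    have h := hΩ.2.1 htmem
    rwa [mem_closedBall, dist_zero_right, norm_smul_sphere, abs_of_nonneg ht0] at h
  by_cases hdz : d = 0
  · have hθ : (θ : Esp n) = (θ' : Esp n) := by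
      rwa [hd, norm_sub_eq_zero_iff] at hdz
    have : t ≤ uS n Ω θ' := le_uS hr hΩ ht0 (hθ ▸ htmem)
    nlinarith
  have hdpos : 0 < d := lt_of_le_of_ne hd0 (Ne.symm hdz)
  by_cases hcase : t ≤ L * d
  · nlinarith
  push_neg at hcase
  have htpos : 0 < t := lt_of_le_of_lt (by positivity) hcase
  set lam := 2 * t * d / r with hlam
  have hlam0 : 0 < lam := by positivity
  have hlam1 : lam < 1 := by
    have h1 : 2 * R ^ 2 * d < t * r := by
      have : 2 * R ^ 2 / r * d * r < t * r :=
        mul_lt_mul_of_pos_right hcase hr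
      calc 2 * R ^ 2 * d = 2 * R ^ 2 / r * d * r := by field_simp
        _ < t * r := this
    have h2 : 2 * R * d < r := by nlinarith [mul_le_mul_of_nonneg_right htR hr.le]
    rw [hlam, div_lt_one hr]
    nlinarith
  set s := (1 - lam) * t with hs
  have hs0 : 0 ≤ s := by nlinarith
  set y : Esp n := ((1 - lam) * t / lam) • ((θ' : Esp n) - (θ : Esp n)) with hy
  have hcoef : 0 ≤ (1 - lam) * t / lam :=
    div_nonneg (mul_nonneg (by linarith) ht0) hlam0.le
  have hnormy : ‖y‖ = (1 - lam) * t / lam * d := by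
    rw [hy, norm_smul, Real.norm_eq_abs, abs_of_nonneg hcoef, norm_sub_rev]
  have hymem : y ∈ ball (0 : Esp n) r := by
    rw [mem_ball, dist_zero_right, hnormy]
    have heq : (1 - lam) * t / lam * d = (1 - lam) * (r / 2) := by
      rw [hlam]; field_simp
    rw [heq]; nlinarith
  have key : lam • y + (1 - lam) • (t • (θ : Esp n)) = s • (θ' : Esp n) := by
    rw [hy, smul_smul, smul_smul, hs]
    have hc : lam * ((1 - lam) * t / lam) = (1 - lam) * t := by field_simp
    rw [hc, smul_sub, sub_add_cancel]
  have hmem : s • (θ' : Esp n) ∈ Ω :=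
    hΩ.2.2 y hymem _ htmem ⟨lam, 1 - lam, hlam0.le, by linarith, by ring, key⟩
  have h1 : (1 - lam) * t ≤ uS n Ω θ' := le_uS hr hΩ hs0 hmem
  have h2 : lam * r = 2 * t * d := by rw [hlam]; field_simp
  have hmain : t * r ≤ uS n Ω θ' * r + 2 * R ^ 2 * d := by
    nlinarith [mul_le_mul_of_nonneg_right h1 hr.le,
      mul_le_mul htR htR ht0 hR0.le, mul_nonneg ht0 hd0]
  have hrne : r ≠ 0 := hr.ne'
  calc t = t * r / r := by field_simp
    _ ≤ (uS n Ω θ' * r + 2 * R ^ 2 * d) / r := by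
        exact (div_le_div_iff_of_pos_right hr).mpr hmain
    _ = uS n Ω θ' + L * d := by rw [hL]; field_simp

lemma uS_abs_sub_le (hr : 0 < r) (hrR : r < R) (hΩ : SrR n r R Ω)
    (θ θ' : sphere (0 : Esp n) 1) :
    |uS n Ω θ - uS n Ω θ'| ≤ (2 * R ^ 2 / r) * ‖(θ : Esp n) - (θ' : Esp n)‖ := by
  rw [abs_sub_le_iff]
  constructor
  · have := uS_lipschitz_aux hr hrR hΩ θ θ'
    linarith
  · have := uS_lipschitz_aux hr hrR hΩ θ' θ
    rw [norm_sub_rev] at this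
    linarith

lemma continuous_uS (hr : 0 < r) (hrR : r < R) (hΩ : SrR n r R Ω) :
    Continuous (uS n Ω) := by
  have hR0 : 0 < R := hr.trans hrR
  have : LipschitzWith (Real.toNNReal (2 * R ^ 2 / r)) (uS n Ω) := by
    apply LipschitzWith.of_dist_le_mul
    intro θ θ'
    rw [Real.dist_eq, Real.coe_toNNReal _ (by positivity), Subtype.dist_eq, dist_eq_norm]
    exact uS_abs_sub_le hr hrR hΩ θ θ'
  exact this.continuous

/-- normalized vector of a nonzero `x`, as an element of the sphere -/
noncomputable def nv {n : ℕ} (x : Esp n) (hx : x ≠ 0) : sphere (0 : Esp n) 1 :=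
  ⟨‖x‖⁻¹ • x, by
    rw [mem_sphere_zero_iff_norm, norm_smul, norm_inv, norm_norm,
      inv_mul_cancel₀ (norm_ne_zero_iff.mpr hx)]⟩

lemma nv_smul {n : ℕ} (x : Esp n) (hx : x ≠ 0) : ‖x‖ • (nv x hx : Esp n) = x := by
  rw [nv, smul_smul, mul_inv_cancel₀ (norm_ne_zero_iff.mpr hx), one_smul]

lemma nv_sub_le {n : ℕ} (x z : Esp n) (hx : x ≠ 0) (hz : z ≠ 0) :
    ‖(nv x hx : Esp n) - (nv z hz : Esp n)‖ ≤ 2 * ‖x - z‖ / ‖x‖ := by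
  have hxn : (0:ℝ) < ‖x‖ := norm_pos_iff.mpr hx
  have hzn : (0:ℝ) < ‖z‖ := norm_pos_iff.mpr hz
  have hsplit : (nv x hx : Esp n) - (nv z hz : Esp n)
      = ‖x‖⁻¹ • (x - z) + (‖x‖⁻¹ - ‖z‖⁻¹) • z := by
    simp only [nv, smul_sub, sub_smul]
    abel
  have h1 : ‖‖x‖⁻¹ • (x - z)‖ = ‖x - z‖ / ‖x‖ := by
    rw [norm_smul, norm_inv, norm_norm]; ring
  have h2 : ‖(‖x‖⁻¹ - ‖z‖⁻¹) • z‖ ≤ ‖x - z‖ / ‖x‖ := by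
    rw [norm_smul, Real.norm_eq_abs]
    have habs : |‖x‖⁻¹ - ‖z‖⁻¹| = |‖z‖ - ‖x‖| / (‖x‖ * ‖z‖) := by
      have he : ‖x‖⁻¹ - ‖z‖⁻¹ = (‖z‖ - ‖x‖) / (‖x‖ * ‖z‖) := by field_simp
      rw [he, abs_div, abs_of_pos (mul_pos hxn hzn)]
    rw [habs]
    have h3 : |‖z‖ - ‖x‖| ≤ ‖x - z‖ := by
      have := abs_norm_sub_norm_le z x
      rwa [norm_sub_rev z x] at this
    calc |‖z‖ - ‖x‖| / (‖x‖ * ‖z‖) * ‖z‖ = |‖z‖ - ‖x‖| / ‖x‖ := by field_simp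
      _ ≤ ‖x - z‖ / ‖x‖ := by gcongr
  calc ‖(nv x hx : Esp n) - (nv z hz : Esp n)‖
      ≤ ‖‖x‖⁻¹ • (x - z)‖ + ‖(‖x‖⁻¹ - ‖z‖⁻¹) • z‖ := by rw [hsplit]; exact norm_add_le _ _
    _ ≤ ‖x - z‖ / ‖x‖ + ‖x - z‖ / ‖x‖ := by rw [h1]; linarith [h2]
    _ = 2 * ‖x - z‖ / ‖x‖ := by ring

lemma graph_mem_frontier (hr : 0 < r) (hΩ : SrR n r R Ω) (θ : sphere (0 : Esp n) 1) :
    (uS n Ω θ) • (θ : Esp n) ∈ frontier Ω := by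
  set u := uS n Ω θ with hu
  have hu0 : 0 < u := lt_of_lt_of_le hr (r_le_uS hr hΩ θ)
  rw [frontier, Set.mem_diff]
  constructor
  · rw [Metric.mem_closure_iff]
    intro ε hε
    set δ := min (ε / 2) (u / 2) with hδ
    have hδ0 : 0 < δ := lt_min (by linarith) (by linarith)
    refine ⟨(u - δ) • (θ : Esp n), ?_, ?_⟩
    · apply smul_mem_of_lt hr hΩ
      · have : δ ≤ u / 2 := min_le_right _ _
        linarith
      · linarith
    · rw [dist_eq_norm, ← sub_smul, norm_smul_sphere]
      have : u - (u - δ) = δ := by ring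
      rw [this, abs_of_pos hδ0]
      calc δ ≤ ε / 2 := min_le_left _ _
        _ < ε := by linarith
  · intro hint
    rw [mem_interior_iff_mem_nhds, Metric.mem_nhds_iff] at hint
    obtain ⟨ε, hε0, hball⟩ := hint
    have hmem : (u + ε / 2) • (θ : Esp n) ∈ Ω := by
      apply hball
      rw [mem_ball, dist_eq_norm, ← sub_smul, norm_smul_sphere]
      have : u + ε / 2 - u = ε / 2 := by ring
      rw [this, abs_of_pos (by linarith)]
      linarith
    have := le_uS hr hΩ (by linarith) hmem
    linarith

lemma closure_norm_le (hr : 0 < r) (hrR : r < R) (hΩ : SrR n r R Ω)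
    {x : Esp n} (hx : x ∈ closure Ω) (hx0 : x ≠ 0) :
    ‖x‖ ≤ uS n Ω (nv x hx0) := by
  set L := 2 * R ^ 2 / r with hL
  have hR0 : 0 < R := hr.trans hrR
  have hL0 : 0 < L := by positivity
  set m := ‖x‖ with hm
  have hm0 : 0 < m := norm_pos_iff.mpr hx0
  apply le_of_forall_pos_le_add
  intro ε' hε'
  set K := 2 * L / m + 1 with hK
  have hK0 : 0 < K := by positivity
  set ε := min (m / 2) (ε' / K) with hε
  have hε0 : 0 < ε := lt_min (by linarith) (by positivity)
  rw [Metric.mem_closure_iff] at hx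
  obtain ⟨z, hzΩ, hdz⟩ := hx (ε) hε0
  rw [dist_eq_norm] at hdz
  have hzn : m - ε ≤ ‖z‖ := by
    have := norm_sub_norm_le x z
    linarith
  have hz0 : z ≠ 0 := by
    intro h
    rw [h, norm_zero] at hzn
    have : ε ≤ m / 2 := min_le_left _ _
    linarith
  have hz1 : ‖z‖ ≤ uS n Ω (nv z hz0) :=
    le_uS hr hΩ (norm_nonneg z) (by rw [nv_smul]; exact hzΩ)
  have hz2 : uS n Ω (nv z hz0) ≤ uS n Ω (nv x hx0) + L * ‖(nv z hz0 : Esp n) - (nv x hx0 : Esp n)‖ :=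
    uS_lipschitz_aux hr hrR hΩ _ _
  have hz3 : ‖(nv z hz0 : Esp n) - (nv x hx0 : Esp n)‖ ≤ 2 * ε / m := by
    rw [norm_sub_rev]
    calc ‖(nv x hx0 : Esp n) - (nv z hz0 : Esp n)‖ ≤ 2 * ‖x - z‖ / m := nv_sub_le x z hx0 hz0
      _ ≤ 2 * ε / m := by gcongr
  have hnz : ‖z‖ ≤ m + ε := by
    have := norm_sub_norm_le z x
    rw [norm_sub_rev] at this
    linarith
  have hεK : ε * K ≤ ε' := by
    have h1 : ε ≤ ε' / K := min_le_right _ _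
    calc ε * K ≤ (ε' / K) * K := mul_le_mul_of_nonneg_right h1 hK0.le
      _ = ε' := by field_simp
  have hLε : L * (2 * ε / m) = 2 * L / m * ε := by ring
  calc m ≤ ‖z‖ + ε := by linarith
    _ ≤ uS n Ω (nv x hx0) + L * (2 * ε / m) + ε := by nlinarith [hz2, hz3, hL0.le]
    _ = uS n Ω (nv x hx0) + ε * K := by rw [hLε, hK]; ring
    _ ≤ uS n Ω (nv x hx0) + ε' := by linarith

lemma mem_interior_of_norm_lt (hr : 0 < r) (hrR : r < R) (hΩ : SrR n r R Ω)
    {x : Esp n} (hx0 : x ≠ 0) (hlt : ‖x‖ < uS n Ω (nv x hx0)) :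
    x ∈ interior Ω := by
  set L := 2 * R ^ 2 / r with hL
  have hR0 : 0 < R := hr.trans hrR
  have hL0 : 0 < L := by positivity
  set m := ‖x‖ with hm
  have hm0 : 0 < m := norm_pos_iff.mpr hx0
  set γ := uS n Ω (nv x hx0) - m with hγ
  have hγ0 : 0 < γ := by rw [hγ]; linarith
  set δ := min (m / 2) (γ / (2 * (1 + 2 * L / m))) with hδ
  have hden : 0 < 1 + 2 * L / m := by positivity
  have hδ0 : 0 < δ := lt_min (by linarith) (by positivity)
  rw [mem_interior_iff_mem_nhds, Metric.mem_nhds_iff]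
  refine ⟨δ, hδ0, fun z hz => ?_⟩
  rw [mem_ball, dist_eq_norm] at hz
  have hz' : ‖x - z‖ < δ := by rwa [norm_sub_rev x z]
  have hzn : m - δ ≤ ‖z‖ := by
    have := norm_sub_norm_le x z
    linarith
  have hδm : δ ≤ m / 2 := min_le_left _ _
  have hz0 : z ≠ 0 := by
    intro h
    rw [h, norm_zero] at hzn
    linarith
  have hz3 : ‖(nv x hx0 : Esp n) - (nv z hz0 : Esp n)‖ ≤ 2 * δ / m := by
    calc ‖(nv x hx0 : Esp n) - (nv z hz0 : Esp n)‖ ≤ 2 * ‖x - z‖ / m := nv_sub_le x z hx0 hz0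
      _ ≤ 2 * δ / m := by gcongr
  have hz2 : uS n Ω (nv x hx0) ≤ uS n Ω (nv z hz0) + L * (2 * δ / m) := by
    have h := uS_lipschitz_aux hr hrR hΩ (nv x hx0) (nv z hz0)
    nlinarith [hz3, hL0.le]
  have hzm : ‖z‖ ≤ m + δ := by
    have := norm_sub_norm_le z x
    linarith
  have hδγ : δ * (2 * (1 + 2 * L / m)) ≤ γ := by
    have h1 : δ ≤ γ / (2 * (1 + 2 * L / m)) := min_le_right _ _
    calc δ * (2 * (1 + 2 * L / m)) ≤ (γ / (2 * (1 + 2 * L / m))) * (2 * (1 + 2 * L / m)) := by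
          nlinarith
      _ = γ := by field_simp
  have hfinal : ‖z‖ < uS n Ω (nv z hz0) := by
    have e1 : L * (2 * δ / m) = 2 * L / m * δ := by ring
    rw [e1] at hz2
    have : δ * (2 * (1 + 2 * L / m)) = 2 * δ + 2 * (2 * L / m * δ) := by ring
    rw [this] at hδγ
    have h2Lδ : 0 ≤ 2 * L / m * δ := by positivity
    rw [hγ] at hδγ
    linarith
  have := smul_mem_of_lt hr hΩ (norm_nonneg z) hfinal
  rwa [nv_smul] at this

lemma frontier_eq_graph (hr : 0 < r) (hrR : r < R) (hΩ : SrR n r R Ω)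
    {x : Esp n} (hx : x ∈ frontier Ω) :
    ∃ hx0 : x ≠ 0, ‖x‖ = uS n Ω (nv x hx0) := by
  rw [frontier, Set.mem_diff] at hx
  obtain ⟨hxc, hxi⟩ := hx
  have hx0 : x ≠ 0 := by
    intro h
    exact hxi ((isOpen_ball.subset_interior_iff.mpr hΩ.1)
      (by rw [h]; exact mem_ball_self hr))
  refine ⟨hx0, le_antisymm (closure_norm_le hr hrR hΩ hxc hx0) ?_⟩
  by_contra hlt
  push_neg at hlt
  exact hxi (mem_interior_of_norm_lt hr hrR hΩ hx0 hlt)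

lemma sphere_nonempty_of_pos (hn : 0 < n) : Nonempty (sphere (0 : Esp n) 1) := by
  refine ⟨⟨EuclideanSpace.single (⟨0, hn⟩ : Fin n) (1 : ℝ), ?_⟩⟩
  rw [mem_sphere_zero_iff_norm, EuclideanSpace.norm_single, norm_one]

lemma frontier_nonempty (hn : 0 < n) (hr : 0 < r) (hΩ : SrR n r R Ω) :
    (frontier Ω).Nonempty := by
  obtain ⟨θ₀⟩ := sphere_nonempty_of_pos (n := n) hn
  exact ⟨_, graph_mem_frontier hr hΩ θ₀⟩

lemma infDist_le_abs (hr : 0 < r) (hΩ : SrR n r R Ω) (θ : sphere (0 : Esp n) 1) (t : ℝ) :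
    infDist (t • (θ : Esp n)) (frontier Ω) ≤ |t - uS n Ω θ| := by
  calc infDist (t • (θ : Esp n)) (frontier Ω)
      ≤ dist (t • (θ : Esp n)) (uS n Ω θ • (θ : Esp n)) :=
        infDist_le_dist_of_mem (graph_mem_frontier hr hΩ θ)
    _ = |t - uS n Ω θ| := by rw [dist_eq_norm, ← sub_smul, norm_smul_sphere]

lemma abs_le_infDist (hn : 0 < n) (hr : 0 < r) (hrR : r < R) (hΩ : SrR n r R Ω)
    (θ : sphere (0 : Esp n) 1) {t : ℝ} (ht : 0 ≤ t) :
    (r / (r + 2 * (2 * R ^ 2 / r))) * |t - uS n Ω θ| ≤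
      infDist (t • (θ : Esp n)) (frontier Ω) := by
  set L := 2 * R ^ 2 / r with hL
  have hR0 : 0 < R := hr.trans hrR
  have hL0 : 0 < L := by positivity
  haveI : Nonempty ↥(frontier Ω) := (frontier_nonempty hn hr hΩ).to_subtype
  rw [infDist_eq_iInf]
  apply le_ciInf
  rintro ⟨y, hy⟩
  obtain ⟨hy0, hyu⟩ := frontier_eq_graph hr hrR hΩ hy
  set θ' := nv y hy0 with hθ'
  set e' := ‖y‖ with he'
  set d := dist (t • (θ : Esp n)) y with hdd
  have hd0 : 0 ≤ d := dist_nonneg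
  have hdn : d = ‖t • (θ : Esp n) - y‖ := dist_eq_norm _ _
  have h_i : |t - e'| ≤ d := by
    have h := abs_norm_sub_norm_le (t • (θ : Esp n)) y
    rwa [norm_smul_sphere, abs_of_nonneg ht, ← hdn] at h
  have hre : r ≤ e' := by rw [hyu]; exact r_le_uS hr hΩ θ'
  have hsplit : e' • ((θ : Esp n) - (θ' : Esp n))
      = (e' - t) • (θ : Esp n) + (t • (θ : Esp n) - y) := by
    rw [smul_sub, hθ', he', nv_smul y hy0, sub_smul]
    abel
  have h_ii : e' * ‖(θ : Esp n) - (θ' : Esp n)‖ ≤ 2 * d := by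
    have h1 : ‖e' • ((θ : Esp n) - (θ' : Esp n))‖ = e' * ‖(θ : Esp n) - (θ' : Esp n)‖ := by
      rw [norm_smul, Real.norm_eq_abs, abs_of_nonneg (le_trans hr.le hre)]
    have h2 : ‖e' • ((θ : Esp n) - (θ' : Esp n))‖ ≤ |e' - t| + d := by
      rw [hsplit]
      calc ‖(e' - t) • (θ : Esp n) + (t • (θ : Esp n) - y)‖
          ≤ ‖(e' - t) • (θ : Esp n)‖ + ‖t • (θ : Esp n) - y‖ := norm_add_le _ _
        _ = |e' - t| + d := by rw [norm_smul_sphere, hdn]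
    rw [h1] at h2
    have : |e' - t| = |t - e'| := abs_sub_comm _ _
    linarith [h_i, h2, this ▸ h2]
  set w := ‖(θ : Esp n) - (θ' : Esp n)‖ with hw
  have hw0 : 0 ≤ w := norm_nonneg _
  have hrw : r * w ≤ 2 * d := le_trans (mul_le_mul_of_nonneg_right hre hw0) h_ii
  have h_iv : |uS n Ω θ' - uS n Ω θ| ≤ L * w := by
    have h := uS_abs_sub_le hr hrR hΩ θ' θ
    rwa [norm_sub_rev, ← hw, ← hL] at h
  have hA : |t - uS n Ω θ| ≤ d + L * w := by
    calc |t - uS n Ω θ| ≤ |t - e'| + |e' - uS n Ω θ| := abs_sub_le _ _ _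
      _ ≤ d + L * w := by
          have : |e' - uS n Ω θ| = |uS n Ω θ' - uS n Ω θ| := by rw [hyu]
          rw [this]
          linarith [h_i, h_iv]
  rw [div_mul_eq_mul_div, div_le_iff₀ (by positivity)]
  have p1 : r * |t - uS n Ω θ| ≤ r * (d + L * w) :=
    mul_le_mul_of_nonneg_left hA hr.le
  have p2 : L * (r * w) ≤ L * (2 * d) := mul_le_mul_of_nonneg_left hrw hL0.le
  nlinarith [p1, p2]

lemma mem_symmDiff_imp {E F : Set (Esp n)} (hr : 0 < r) (hΩE : SrR n r R E)
    (hΩF : SrR n r R F) {x : Esp n} (hx : x ∈ symmDiff E F) :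
    ∃ hx0 : x ≠ 0, min (uS n E (nv x hx0)) (uS n F (nv x hx0)) ≤ ‖x‖ ∧
      ‖x‖ ≤ max (uS n E (nv x hx0)) (uS n F (nv x hx0)) := by
  rw [Set.mem_symmDiff] at hx
  rcases hx with ⟨hxE, hxF⟩ | ⟨hxF, hxE⟩
  · have hx0 : x ≠ 0 := fun h => hxF (h ▸ zero_mem hr hΩF)
    have hE : ‖x‖ ≤ uS n E (nv x hx0) :=
      le_uS hr hΩE (norm_nonneg x) (by rw [nv_smul]; exact hxE)
    have hF : uS n F (nv x hx0) ≤ ‖x‖ := by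
      by_contra h
      push_neg at h
      exact hxF (by rw [← nv_smul x hx0]; exact smul_mem_of_lt hr hΩF (norm_nonneg x) h)
    exact ⟨hx0, le_trans (min_le_right _ _) hF, le_trans hE (le_max_left _ _)⟩
  · have hx0 : x ≠ 0 := fun h => hxE (h ▸ zero_mem hr hΩE)
    have hF : ‖x‖ ≤ uS n F (nv x hx0) :=
      le_uS hr hΩF (norm_nonneg x) (by rw [nv_smul]; exact hxF)
    have hE : uS n E (nv x hx0) ≤ ‖x‖ := by
      by_contra h
      push_neg at h
      exact hxE (by rw [← nv_smul x hx0]; exact smul_mem_of_lt hr hΩE (norm_nonneg x) h)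
    exact ⟨hx0, le_trans (min_le_left _ _) hE, le_trans hF (le_max_right _ _)⟩

lemma between_mem_symmDiff {E F : Set (Esp n)} (hr : 0 < r) (hΩE : SrR n r R E)
    (hΩF : SrR n r R F) (θ : sphere (0 : Esp n) 1) {t : ℝ} (ht : 0 ≤ t)
    (h1 : min (uS n E θ) (uS n F θ) < t) (h2 : t < max (uS n E θ) (uS n F θ)) :
    t • (θ : Esp n) ∈ symmDiff E F := by
  rw [Set.mem_symmDiff]
  rcases le_total (uS n E θ) (uS n F θ) with hc | hc
  · rw [min_eq_left hc] at h1
    rw [max_eq_right hc] at h2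
    right
    refine ⟨smul_mem_of_lt hr hΩF ht h2, fun hmem => ?_⟩
    exact absurd (le_uS hr hΩE ht hmem) (not_le.mpr h1)
  · rw [min_eq_right hc] at h1
    rw [max_eq_left hc] at h2
    left
    refine ⟨smul_mem_of_lt hr hΩE ht h2, fun hmem => ?_⟩
    exact absurd (le_uS hr hΩF ht hmem) (not_le.mpr h1)

section Interval

open intervalIntegral in
lemma integral_abs_Ioc {a b e : ℝ} (hab : a ≤ b) (he : e = a ∨ e = b) :
    ∫ t in Set.Ioc a b, |t - e| = (b - a) ^ 2 / 2 := by
  rcases he with rfl | rfl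
  · have h := integral_pow_abs_sub_uIoc (a := e) (b := b) (n := 1)
    rw [Set.uIoc_of_le hab] at h
    simp only [pow_one] at h
    rw [h, abs_of_nonneg (sub_nonneg.2 hab)]
    norm_num
  · have h := integral_pow_abs_sub_uIoc (a := e) (b := a) (n := 1)
    rw [Set.uIoc_of_ge hab] at h
    simp only [pow_one] at h
    rw [h]
    rw [abs_of_nonpos (sub_nonpos.2 hab)]
    norm_num
    try ring

lemma integral_abs_Icc {a b e : ℝ} (hab : a ≤ b) (he : e = a ∨ e = b) :
    ∫ t in Set.Icc a b, |t - e| = (b - a) ^ 2 / 2 := by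
  rw [MeasureTheory.integral_Icc_eq_integral_Ioc]
  exact integral_abs_Ioc hab he

lemma integral_abs_Ioo {a b e : ℝ} (hab : a ≤ b) (he : e = a ∨ e = b) :
    ∫ t in Set.Ioo a b, |t - e| = (b - a) ^ 2 / 2 := by
  rw [← MeasureTheory.integral_Ioc_eq_integral_Ioo]
  exact integral_abs_Ioc hab he

end Interval

section Inner

open ENNReal

lemma inner_lintegral_le (m : ℕ) {a b e Rb : ℝ} (h0 : 0 < a) (hab : a ≤ b)
    (hbR : b ≤ Rb) (he : e = a ∨ e = b) :
    ∫⁻ t : Set.Ioi (0:ℝ),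
        (if a ≤ (t : ℝ) ∧ (t : ℝ) ≤ b then ENNReal.ofReal |(t : ℝ) - e| else 0)
        ∂(Measure.volumeIoiPow m)
      ≤ ENNReal.ofReal (Rb ^ m * ((b - a) ^ 2 / 2)) := by
  have hRb0 : (0:ℝ) ≤ Rb := le_trans (le_trans h0.le hab) hbR
  have hdens : Measurable fun t : Set.Ioi (0:ℝ) => ENNReal.ofReal ((t : ℝ) ^ m) :=
    (measurable_subtype_coe.pow_const m).ennreal_ofReal
  have hset : MeasurableSet {t : Set.Ioi (0:ℝ) | a ≤ (t : ℝ) ∧ (t : ℝ) ≤ b} :=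
    measurable_subtype_coe measurableSet_Icc
  have hf : Measurable (fun t : Set.Ioi (0:ℝ) =>
      if a ≤ (t : ℝ) ∧ (t : ℝ) ≤ b then ENNReal.ofReal |(t : ℝ) - e| else 0) :=
    Measurable.ite hset
      (((measurable_subtype_coe.sub_const e).abs).ennreal_ofReal) measurable_const
  rw [Measure.volumeIoiPow, lintegral_withDensity_eq_lintegral_mul _ hdens hf]
  simp only [Pi.mul_apply]
  rw [lintegral_subtype_comap measurableSet_Ioi
    (fun s : ℝ => ENNReal.ofReal (s ^ m) *
      if a ≤ s ∧ s ≤ b then ENNReal.ofReal |s - e| else 0)]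
  have step1 : ∫⁻ s in Set.Ioi (0:ℝ), ENNReal.ofReal (s ^ m) *
      (if a ≤ s ∧ s ≤ b then ENNReal.ofReal |s - e| else 0)
      ≤ ∫⁻ s in Set.Ioi (0:ℝ), ENNReal.ofReal (Rb ^ m) *
      (if a ≤ s ∧ s ≤ b then ENNReal.ofReal |s - e| else 0) := by
    apply MeasureTheory.setLIntegral_mono' measurableSet_Ioi
    intro s hs
    by_cases hc : a ≤ s ∧ s ≤ b
    · simp only [hc, if_true]
      refine mul_le_mul_left (ENNReal.ofReal_le_ofReal ?_) _
      exact pow_le_pow_left₀ (le_of_lt hs) (hc.2.trans hbR) m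
    · simp [hc]
  refine le_trans step1 ?_
  rw [MeasureTheory.lintegral_const_mul' _ _ ENNReal.ofReal_ne_top]
  have hind : (fun s : ℝ => if a ≤ s ∧ s ≤ b then ENNReal.ofReal |s - e| else 0)
      = (Set.Icc a b).indicator (fun s => ENNReal.ofReal |s - e|) := by
    funext s
    simp [Set.indicator_apply, Set.mem_Icc]
  have hsub : Set.Icc a b ∩ Set.Ioi (0:ℝ) = Set.Icc a b :=
    Set.inter_eq_left.mpr (fun x hx => lt_of_lt_of_le h0 hx.1)
  rw [hind, MeasureTheory.lintegral_indicator measurableSet_Icc,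
    MeasureTheory.Measure.restrict_restrict measurableSet_Icc, hsub]
  rw [← MeasureTheory.ofReal_integral_eq_lintegral_ofReal
    ((Continuous.integrableOn_Icc (by fun_prop : Continuous fun s : ℝ => |s - e|)))
    (Filter.Eventually.of_forall fun s => abs_nonneg _)]
  rw [integral_abs_Icc hab he, ← ENNReal.ofReal_mul (by positivity)]

lemma inner_lintegral_ge (m : ℕ) {a b e rb c : ℝ} (hrb : 0 < rb) (hra : rb ≤ a)
    (hab : a ≤ b) (he : e = a ∨ e = b) (hc : 0 ≤ c) :
    ENNReal.ofReal (c * (rb ^ m * ((b - a) ^ 2 / 2)))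
      ≤ ∫⁻ t : Set.Ioi (0:ℝ),
        (if a < (t : ℝ) ∧ (t : ℝ) < b then ENNReal.ofReal (c * |(t : ℝ) - e|) else 0)
        ∂(Measure.volumeIoiPow m) := by
  have h0 : (0:ℝ) < a := lt_of_lt_of_le hrb hra
  have hdens : Measurable fun t : Set.Ioi (0:ℝ) => ENNReal.ofReal ((t : ℝ) ^ m) :=
    (measurable_subtype_coe.pow_const m).ennreal_ofReal
  have hset : MeasurableSet {t : Set.Ioi (0:ℝ) | a < (t : ℝ) ∧ (t : ℝ) < b} :=
    measurable_subtype_coe measurableSet_Ioo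
  have hf : Measurable (fun t : Set.Ioi (0:ℝ) =>
      if a < (t : ℝ) ∧ (t : ℝ) < b then ENNReal.ofReal (c * |(t : ℝ) - e|) else 0) :=
    Measurable.ite hset
      ((((measurable_subtype_coe.sub_const e).abs).const_mul c).ennreal_ofReal) measurable_const
  rw [Measure.volumeIoiPow, lintegral_withDensity_eq_lintegral_mul _ hdens hf]
  simp only [Pi.mul_apply]
  rw [lintegral_subtype_comap measurableSet_Ioi
    (fun s : ℝ => ENNReal.ofReal (s ^ m) *
      if a < s ∧ s < b then ENNReal.ofReal (c * |s - e|) else 0)]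
  have step1 : ∫⁻ s in Set.Ioi (0:ℝ), ENNReal.ofReal (rb ^ m) *
      (if a < s ∧ s < b then ENNReal.ofReal (c * |s - e|) else 0)
      ≤ ∫⁻ s in Set.Ioi (0:ℝ), ENNReal.ofReal (s ^ m) *
      (if a < s ∧ s < b then ENNReal.ofReal (c * |s - e|) else 0) := by
    apply MeasureTheory.setLIntegral_mono' measurableSet_Ioi
    intro s hs
    by_cases hcc : a < s ∧ s < b
    · simp only [hcc, if_true]
      refine mul_le_mul_left (ENNReal.ofReal_le_ofReal ?_) _
      exact pow_le_pow_left₀ hrb.le (le_trans hra hcc.1.le) m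
    · simp [hcc]
  refine le_trans ?_ step1
  rw [MeasureTheory.lintegral_const_mul' _ _ ENNReal.ofReal_ne_top]
  have hind : (fun s : ℝ => if a < s ∧ s < b then ENNReal.ofReal (c * |s - e|) else 0)
      = (Set.Ioo a b).indicator (fun s => ENNReal.ofReal (c * |s - e|)) := by
    funext s
    simp [Set.indicator_apply, Set.mem_Ioo]
  have hsub : Set.Ioo a b ∩ Set.Ioi (0:ℝ) = Set.Ioo a b :=
    Set.inter_eq_left.mpr (fun x hx => lt_trans h0 hx.1)
  rw [hind, MeasureTheory.lintegral_indicator measurableSet_Ioo,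
    MeasureTheory.Measure.restrict_restrict measurableSet_Ioo, hsub]
  rw [← MeasureTheory.ofReal_integral_eq_lintegral_ofReal
    ((Continuous.integrableOn_Icc
        (by fun_prop : Continuous fun s : ℝ => c * |s - e|)).mono_set
      Set.Ioo_subset_Icc_self)
    (Filter.Eventually.of_forall fun s => mul_nonneg hc (abs_nonneg _))]
  rw [MeasureTheory.integral_const_mul, integral_abs_Ioo hab he,
    ← ENNReal.ofReal_mul (by positivity : (0:ℝ) ≤ rb ^ m)]
  exact ENNReal.ofReal_le_ofReal (le_of_eq (by ring))

end Inner

section Polar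

open ENNReal

noncomputable abbrev sphM (n : ℕ) : Measure (sphere (0 : Esp n) 1) :=
  (volume : Measure (Esp n)).toSphere

noncomputable abbrev radM (n : ℕ) : Measure (Set.Ioi (0:ℝ)) :=
  Measure.volumeIoiPow (Module.finrank ℝ (Esp n) - 1)

noncomputable abbrev prodM (n : ℕ) : Measure (sphere (0 : Esp n) 1 × Set.Ioi (0:ℝ)) :=
  (sphM n).prod (radM n)

noncomputable def Tmap (n : ℕ) : sphere (0 : Esp n) 1 × Set.Ioi (0:ℝ) → Esp n :=
  fun p => (p.2 : ℝ) • (p.1 : Esp n)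

lemma Tmap_eq (n : ℕ) :
    Tmap n = (Subtype.val ∘ (homeomorphUnitSphereProd (Esp n)).symm) := rfl

lemma Tmap_measurableEmbedding (n : ℕ) : MeasurableEmbedding (Tmap n) := by
  rw [Tmap_eq]
  exact (MeasurableEmbedding.subtype_coe (measurableSet_singleton (0 : Esp n)).compl).comp
    (Homeomorph.measurableEmbedding _)

lemma map_Tmap (n : ℕ) :
    Measure.map (Tmap n) (prodM n) = (volume : Measure (Esp n)).restrict {(0 : Esp n)}ᶜ := by
  have mp := (volume : Measure (Esp n)).measurePreserving_homeomorphUnitSphereProd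
  have mp2 : MeasurePreserving (homeomorphUnitSphereProd (Esp n)).toMeasurableEquiv
      ((volume : Measure (Esp n)).comap Subtype.val) (prodM n) :=
    ⟨(homeomorphUnitSphereProd (Esp n)).measurable, mp.map_eq⟩
  have mp3 := mp2.symm
  rw [Tmap_eq, ← Measure.map_map measurable_subtype_coe
    (Homeomorph.measurable (homeomorphUnitSphereProd (Esp n)).symm)]
  have : Measure.map (⇑(homeomorphUnitSphereProd (Esp n)).symm) (prodM n)
      = (volume : Measure (Esp n)).comap Subtype.val := mp3.map_eq
  rw [this, map_comap_subtype_coe (measurableSet_singleton (0 : Esp n)).compl]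

lemma polar_setLIntegral {n : ℕ} (B : Set (sphere (0 : Esp n) 1 × Set.Ioi (0:ℝ)))
    (hB : MeasurableSet B) (g : Esp n → ℝ≥0∞) (hg : Measurable g) :
    ∫⁻ x in Tmap n '' B, g x ∂(volume : Measure (Esp n)) = ∫⁻ p in B, g (Tmap n p) ∂(prodM n) := by
  have hTm : Measurable (Tmap n) := (Tmap_measurableEmbedding n).measurable
  have hBim : MeasurableSet (Tmap n '' B) := (Tmap_measurableEmbedding n).measurableSet_image' hB
  have hsub : Tmap n '' B ⊆ {(0 : Esp n)}ᶜ := by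
    rintro x ⟨p, hp, rfl⟩
    exact smul_ne_zero (ne_of_gt p.2.2) (ne_of_mem_sphere p.1.2 one_ne_zero)
  calc ∫⁻ x in Tmap n '' B, g x ∂(volume : Measure (Esp n))
      = ∫⁻ x in Tmap n '' B, g x ∂((volume : Measure (Esp n)).restrict {(0 : Esp n)}ᶜ) := by
        rw [Measure.restrict_restrict hBim, Set.inter_eq_left.mpr hsub]
    _ = ∫⁻ x in Tmap n '' B, g x ∂(Measure.map (Tmap n) (prodM n)) := by rw [map_Tmap]
    _ = ∫⁻ p in B, g (Tmap n p) ∂(prodM n) := by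
        rw [Measure.restrict_map hTm hBim,
          Set.preimage_image_eq B (Tmap_measurableEmbedding n).injective,
          lintegral_map hg hTm]

end Polar

section Comparability

open ENNReal

variable {n : ℕ} {r R : ℝ}

/-- The `ℝ≥0∞`-valued quantity `d̃²`. -/
noncomputable def Ifun (n : ℕ) (E F : Set (Esp n)) : ℝ≥0∞ :=
  ∫⁻ x in symmDiff E F, ENNReal.ofReal (infDist x (frontier E)) ∂(volume : Measure (Esp n))

/-- Squared `L²` distance between the radial functions. -/
noncomputable def Wfun (n : ℕ) (E F : Set (Esp n)) : ℝ≥0∞ :=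
  ∫⁻ θ : sphere (0 : Esp n) 1, ENNReal.ofReal ((uS n E θ - uS n F θ) ^ 2) ∂(sphM n)

lemma Ifun_le (hr : 0 < r) (hrR : r < R) {E F : Set (Esp n)}
    (hE : SrR n r R E) (hF : SrR n r R F) :
    Ifun n E F ≤ ENNReal.ofReal (R ^ (Module.finrank ℝ (Esp n) - 1) / 2) * Wfun n E F := by
  set m := Module.finrank ℝ (Esp n) - 1 with hm
  have hR0 : 0 < R := hr.trans hrR
  have hcontE : Continuous (uS n E) := continuous_uS hr hrR hE
  have hcontF : Continuous (uS n F) := continuous_uS hr hrR hF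
  set Bcl : Set (sphere (0 : Esp n) 1 × Set.Ioi (0:ℝ)) :=
    {p | min (uS n E p.1) (uS n F p.1) ≤ (p.2 : ℝ) ∧
         (p.2 : ℝ) ≤ max (uS n E p.1) (uS n F p.1)} with hBcldef
  have hminm : Measurable fun p : sphere (0 : Esp n) 1 × Set.Ioi (0:ℝ) =>
      min (uS n E p.1) (uS n F p.1) :=
    ((hcontE.comp continuous_fst).min (hcontF.comp continuous_fst)).measurable
  have hmaxm : Measurable fun p : sphere (0 : Esp n) 1 × Set.Ioi (0:ℝ) =>
      max (uS n E p.1) (uS n F p.1) :=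
    ((hcontE.comp continuous_fst).max (hcontF.comp continuous_fst)).measurable
  have hsnd : Measurable fun p : sphere (0 : Esp n) 1 × Set.Ioi (0:ℝ) => (p.2 : ℝ) :=
    (continuous_subtype_val.comp continuous_snd).measurable
  have hBcl : MeasurableSet Bcl :=
    (measurableSet_le hminm hsnd).inter (measurableSet_le hsnd hmaxm)
  have hgmeas : Measurable fun x : Esp n => ENNReal.ofReal (infDist x (frontier E)) :=
    (continuous_infDist_pt (frontier E)).measurable.ennreal_ofReal
  have hhmeas : Measurable fun p : sphere (0 : Esp n) 1 × Set.Ioi (0:ℝ) =>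
      ENNReal.ofReal |(p.2 : ℝ) - uS n E p.1| :=
    ((hsnd.sub (hcontE.measurable.comp measurable_fst)).abs).ennreal_ofReal
  have hsubset : symmDiff E F ⊆ Tmap n '' Bcl := by
    intro x hx
    obtain ⟨hx0, h1, h2⟩ := mem_symmDiff_imp hr hE hF hx
    exact ⟨(nv x hx0, ⟨‖x‖, norm_pos_iff.mpr hx0⟩), ⟨h1, h2⟩, nv_smul x hx0⟩
  calc Ifun n E F
      ≤ ∫⁻ x in Tmap n '' Bcl, ENNReal.ofReal (infDist x (frontier E))
          ∂(volume : Measure (Esp n)) :=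
        lintegral_mono' (Measure.restrict_mono hsubset le_rfl) le_rfl
    _ = ∫⁻ p in Bcl, ENNReal.ofReal (infDist (Tmap n p) (frontier E)) ∂(prodM n) :=
        polar_setLIntegral Bcl hBcl _ hgmeas
    _ ≤ ∫⁻ p in Bcl, ENNReal.ofReal |(p.2 : ℝ) - uS n E p.1| ∂(prodM n) := by
        apply MeasureTheory.setLIntegral_mono' hBcl
        intro p _
        exact ENNReal.ofReal_le_ofReal (infDist_le_abs hr hE p.1 (p.2 : ℝ))
    _ = ∫⁻ θ, ∫⁻ t, Bcl.indicator
          (fun p => ENNReal.ofReal |(p.2 : ℝ) - uS n E p.1|) (θ, t) ∂(radM n) ∂(sphM n) := by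
        rw [← MeasureTheory.lintegral_indicator hBcl]
        exact MeasureTheory.lintegral_prod _ ((hhmeas.indicator hBcl).aemeasurable)
    _ ≤ ∫⁻ θ, ENNReal.ofReal ((R ^ m / 2) * (uS n E θ - uS n F θ) ^ 2) ∂(sphM n) := by
        apply MeasureTheory.lintegral_mono
        intro θ
        dsimp only
        have h0a : 0 < min (uS n E θ) (uS n F θ) :=
          lt_of_lt_of_le hr (le_min (r_le_uS hr hE θ) (r_le_uS hr hF θ))
        have hab : min (uS n E θ) (uS n F θ) ≤ max (uS n E θ) (uS n F θ) := min_le_max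
        have hbR : max (uS n E θ) (uS n F θ) ≤ R :=
          max_le (uS_le_R hr hE θ) (uS_le_R hr hF θ)
        have he : uS n E θ = min (uS n E θ) (uS n F θ) ∨
            uS n E θ = max (uS n E θ) (uS n F θ) := by
          rcases le_total (uS n E θ) (uS n F θ) with hc | hc
          · exact Or.inl (min_eq_left hc).symm
          · exact Or.inr (max_eq_left hc).symm
        have heq : (fun t : Set.Ioi (0:ℝ) => Bcl.indicator
            (fun p => ENNReal.ofReal |(p.2 : ℝ) - uS n E p.1|) (θ, t))
            = fun t : Set.Ioi (0:ℝ) =>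
              if min (uS n E θ) (uS n F θ) ≤ (t : ℝ) ∧
                 (t : ℝ) ≤ max (uS n E θ) (uS n F θ)
              then ENNReal.ofReal |(t : ℝ) - uS n E θ| else 0 := by
          funext t
          simp [hBcldef, Set.indicator_apply, Set.mem_setOf_eq]
        rw [heq]
        refine le_trans (inner_lintegral_le m h0a hab hbR he) ?_
        apply le_of_eq
        congr 1
        rw [max_sub_min_eq_abs, sq_abs]
        ring
    _ = ENNReal.ofReal (R ^ m / 2) * Wfun n E F := by
        rw [Wfun]
        rw [← MeasureTheory.lintegral_const_mul' _ _ ENNReal.ofReal_ne_top]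
        congr 1
        funext θ
        rw [← ENNReal.ofReal_mul (by positivity)]

lemma Ifun_ge (hn : 0 < n) (hr : 0 < r) (hrR : r < R) {E F : Set (Esp n)}
    (hE : SrR n r R E) (hF : SrR n r R F) :
    ENNReal.ofReal ((r / (r + 2 * (2 * R ^ 2 / r))) *
        (r ^ (Module.finrank ℝ (Esp n) - 1) / 2)) * Wfun n E F ≤ Ifun n E F := by
  set m := Module.finrank ℝ (Esp n) - 1 with hm
  have hR0 : 0 < R := hr.trans hrR
  set cc := r / (r + 2 * (2 * R ^ 2 / r)) with hcc
  have hcc0 : 0 < cc := by rw [hcc]; positivity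
  have hcontE : Continuous (uS n E) := continuous_uS hr hrR hE
  have hcontF : Continuous (uS n F) := continuous_uS hr hrR hF
  set Bop : Set (sphere (0 : Esp n) 1 × Set.Ioi (0:ℝ)) :=
    {p | min (uS n E p.1) (uS n F p.1) < (p.2 : ℝ) ∧
         (p.2 : ℝ) < max (uS n E p.1) (uS n F p.1)} with hBopdef
  have hminm : Measurable fun p : sphere (0 : Esp n) 1 × Set.Ioi (0:ℝ) =>
      min (uS n E p.1) (uS n F p.1) :=
    ((hcontE.comp continuous_fst).min (hcontF.comp continuous_fst)).measurable
  have hmaxm : Measurable fun p : sphere (0 : Esp n) 1 × Set.Ioi (0:ℝ) =>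
      max (uS n E p.1) (uS n F p.1) :=
    ((hcontE.comp continuous_fst).max (hcontF.comp continuous_fst)).measurable
  have hsnd : Measurable fun p : sphere (0 : Esp n) 1 × Set.Ioi (0:ℝ) => (p.2 : ℝ) :=
    (continuous_subtype_val.comp continuous_snd).measurable
  have hBop : MeasurableSet Bop :=
    (measurableSet_lt hminm hsnd).inter (measurableSet_lt hsnd hmaxm)
  have hgmeas : Measurable fun x : Esp n => ENNReal.ofReal (infDist x (frontier E)) :=
    (continuous_infDist_pt (frontier E)).measurable.ennreal_ofReal
  have hhmeas : Measurable fun p : sphere (0 : Esp n) 1 × Set.Ioi (0:ℝ) =>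
      ENNReal.ofReal (cc * |(p.2 : ℝ) - uS n E p.1|) :=
    (((hsnd.sub (hcontE.measurable.comp measurable_fst)).abs).const_mul cc).ennreal_ofReal
  have hsubset : Tmap n '' Bop ⊆ symmDiff E F := by
    rintro x ⟨p, hp, rfl⟩
    exact between_mem_symmDiff hr hE hF p.1 p.2.2.le hp.1 hp.2
  calc ENNReal.ofReal (cc * (r ^ m / 2)) * Wfun n E F
      = ∫⁻ θ, ENNReal.ofReal ((cc * (r ^ m / 2)) * (uS n E θ - uS n F θ) ^ 2) ∂(sphM n) := by
        rw [Wfun, ← MeasureTheory.lintegral_const_mul' _ _ ENNReal.ofReal_ne_top]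
        congr 1
        funext θ
        rw [← ENNReal.ofReal_mul (by positivity)]
    _ ≤ ∫⁻ θ, ∫⁻ t, Bop.indicator
          (fun p => ENNReal.ofReal (cc * |(p.2 : ℝ) - uS n E p.1|)) (θ, t)
          ∂(radM n) ∂(sphM n) := by
        apply MeasureTheory.lintegral_mono
        intro θ
        dsimp only
        have h0a : r ≤ min (uS n E θ) (uS n F θ) :=
          le_min (r_le_uS hr hE θ) (r_le_uS hr hF θ)
        have hab : min (uS n E θ) (uS n F θ) ≤ max (uS n E θ) (uS n F θ) := min_le_max
        have he : uS n E θ = min (uS n E θ) (uS n F θ) ∨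
            uS n E θ = max (uS n E θ) (uS n F θ) := by
          rcases le_total (uS n E θ) (uS n F θ) with hc | hc
          · exact Or.inl (min_eq_left hc).symm
          · exact Or.inr (max_eq_left hc).symm
        have heq : (fun t : Set.Ioi (0:ℝ) => Bop.indicator
            (fun p => ENNReal.ofReal (cc * |(p.2 : ℝ) - uS n E p.1|)) (θ, t))
            = fun t : Set.Ioi (0:ℝ) =>
              if min (uS n E θ) (uS n F θ) < (t : ℝ) ∧
                 (t : ℝ) < max (uS n E θ) (uS n F θ)
              then ENNReal.ofReal (cc * |(t : ℝ) - uS n E θ|) else 0 := by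
          funext t
          simp [hBopdef, Set.indicator_apply, Set.mem_setOf_eq]
        rw [heq]
        refine le_trans ?_ (inner_lintegral_ge m hr h0a hab he hcc0.le)
        apply le_of_eq
        congr 1
        rw [max_sub_min_eq_abs, sq_abs]
        ring
    _ = ∫⁻ p in Bop, ENNReal.ofReal (cc * |(p.2 : ℝ) - uS n E p.1|) ∂(prodM n) := by
        rw [← MeasureTheory.lintegral_indicator hBop]
        exact (MeasureTheory.lintegral_prod _ ((hhmeas.indicator hBop).aemeasurable)).symm
    _ ≤ ∫⁻ p in Bop, ENNReal.ofReal (infDist (Tmap n p) (frontier E)) ∂(prodM n) := by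
        apply MeasureTheory.setLIntegral_mono' hBop
        intro p _
        calc ENNReal.ofReal (cc * |(p.2 : ℝ) - uS n E p.1|)
            ≤ ENNReal.ofReal (infDist ((p.2 : ℝ) • (p.1 : Esp n)) (frontier E)) :=
              ENNReal.ofReal_le_ofReal (abs_le_infDist hn hr hrR hE p.1 p.2.2.le)
          _ = ENNReal.ofReal (infDist (Tmap n p) (frontier E)) := rfl
    _ = ∫⁻ x in Tmap n '' Bop, ENNReal.ofReal (infDist x (frontier E))
          ∂(volume : Measure (Esp n)) := (polar_setLIntegral Bop hBop _ hgmeas).symm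
    _ ≤ Ifun n E F :=
        lintegral_mono' (Measure.restrict_mono hsubset le_rfl) le_rfl

end Comparability

section RealSide

open ENNReal

variable {n : ℕ} {r R : ℝ}

/-- Real-valued `d̃²`. -/
noncomputable def D2 (n : ℕ) (E F : Set (Esp n)) : ℝ :=
  ∫ x in symmDiff E F, infDist x (frontier E)

/-- Real-valued squared `L²` distance between radial functions. -/
noncomputable def W2 (n : ℕ) (E F : Set (Esp n)) : ℝ :=
  ∫ θ : sphere (0 : Esp n) 1, (uS n E θ - uS n F θ) ^ 2 ∂(sphM n)

lemma W2_nonneg (n : ℕ) (E F : Set (Esp n)) : 0 ≤ W2 n E F :=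
  integral_nonneg fun θ => sq_nonneg _

lemma D2_nonneg (n : ℕ) (E F : Set (Esp n)) : 0 ≤ D2 n E F :=
  integral_nonneg fun x => infDist_nonneg

lemma integrable_sq_diff (hr : 0 < r) (hrR : r < R) {E F : Set (Esp n)}
    (hE : SrR n r R E) (hF : SrR n r R F) :
    Integrable (fun θ => (uS n E θ - uS n F θ) ^ 2) (sphM n) := by
  have hcont : Continuous fun θ => (uS n E θ - uS n F θ) ^ 2 :=
    ((continuous_uS hr hrR hE).sub (continuous_uS hr hrR hF)).pow 2
  exact integrableOn_univ.mp (hcont.continuousOn.integrableOn_compact isCompact_univ)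

lemma Wfun_eq (hr : 0 < r) (hrR : r < R) {E F : Set (Esp n)}
    (hE : SrR n r R E) (hF : SrR n r R F) :
    Wfun n E F = ENNReal.ofReal (W2 n E F) :=
  (MeasureTheory.ofReal_integral_eq_lintegral_ofReal (integrable_sq_diff hr hrR hE hF)
    (Filter.Eventually.of_forall fun θ => sq_nonneg _)).symm

lemma D2_eq_toReal (n : ℕ) (E F : Set (Esp n)) : D2 n E F = (Ifun n E F).toReal :=
  MeasureTheory.integral_eq_lintegral_of_nonneg_ae
    (Filter.Eventually.of_forall fun x => infDist_nonneg)
    (continuous_infDist_pt (frontier E)).aestronglyMeasurable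

lemma D2_le (hr : 0 < r) (hrR : r < R) {E F : Set (Esp n)}
    (hE : SrR n r R E) (hF : SrR n r R F) :
    D2 n E F ≤ (R ^ (Module.finrank ℝ (Esp n) - 1) / 2) * W2 n E F := by
  have hR0 : 0 < R := hr.trans hrR
  have h := Ifun_le hr hrR hE hF
  rw [Wfun_eq hr hrR hE hF, ← ENNReal.ofReal_mul (by positivity)] at h
  rw [D2_eq_toReal]
  calc (Ifun n E F).toReal
      ≤ (ENNReal.ofReal ((R ^ (Module.finrank ℝ (Esp n) - 1) / 2) * W2 n E F)).toReal :=
        ENNReal.toReal_mono ENNReal.ofReal_ne_top h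
    _ = (R ^ (Module.finrank ℝ (Esp n) - 1) / 2) * W2 n E F :=
        ENNReal.toReal_ofReal (mul_nonneg (by positivity) (W2_nonneg n E F))

lemma Ifun_ne_top (hr : 0 < r) (hrR : r < R) {E F : Set (Esp n)}
    (hE : SrR n r R E) (hF : SrR n r R F) : Ifun n E F ≠ ⊤ := by
  apply ne_top_of_le_ne_top _ (Ifun_le hr hrR hE hF)
  rw [Wfun_eq hr hrR hE hF]
  exact ENNReal.mul_ne_top ENNReal.ofReal_ne_top ENNReal.ofReal_ne_top

lemma D2_ge (hn : 0 < n) (hr : 0 < r) (hrR : r < R) {E F : Set (Esp n)}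
    (hE : SrR n r R E) (hF : SrR n r R F) :
    ((r / (r + 2 * (2 * R ^ 2 / r))) * (r ^ (Module.finrank ℝ (Esp n) - 1) / 2)) * W2 n E F
      ≤ D2 n E F := by
  have hR0 : 0 < R := hr.trans hrR
  have h := Ifun_ge hn hr hrR hE hF
  rw [Wfun_eq hr hrR hE hF, ← ENNReal.ofReal_mul (by positivity)] at h
  rw [D2_eq_toReal]
  calc ((r / (r + 2 * (2 * R ^ 2 / r))) * (r ^ (Module.finrank ℝ (Esp n) - 1) / 2)) * W2 n E F
      = (ENNReal.ofReal (((r / (r + 2 * (2 * R ^ 2 / r))) *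
          (r ^ (Module.finrank ℝ (Esp n) - 1) / 2)) * W2 n E F)).toReal :=
        (ENNReal.toReal_ofReal (mul_nonneg (by positivity) (W2_nonneg n E F))).symm
    _ ≤ (Ifun n E F).toReal := ENNReal.toReal_mono (Ifun_ne_top hr hrR hE hF) h

lemma W2_chain (hr : 0 < r) (hrR : r < R) (k : ℕ) (F : ℕ → Set (Esp n))
    (hF : ∀ j ≤ k, SrR n r R (F j)) :
    W2 n (F k) (F 0) ≤ (k : ℝ) * ∑ j ∈ Finset.range k, W2 n (F (j + 1)) (F j) := by
  rcases Nat.eq_zero_or_pos k with rfl | hk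
  · simp [W2]
  have hint : ∀ j < k, Integrable
      (fun θ => (uS n (F (j + 1)) θ - uS n (F j) θ) ^ 2) (sphM n) := fun j hj =>
    integrable_sq_diff hr hrR (hF (j + 1) hj) (hF j (le_of_lt hj))
  have hRHSint : Integrable
      (fun θ => (k : ℝ) * ∑ j ∈ Finset.range k,
        (uS n (F (j + 1)) θ - uS n (F j) θ) ^ 2) (sphM n) := by
    apply Integrable.const_mul
    apply MeasureTheory.integrable_finset_sum
    intro j hj
    exact hint j (Finset.mem_range.mp hj)
  have hpt : ∀ θ : sphere (0 : Esp n) 1,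
      (uS n (F k) θ - uS n (F 0) θ) ^ 2 ≤
        (k : ℝ) * ∑ j ∈ Finset.range k, (uS n (F (j + 1)) θ - uS n (F j) θ) ^ 2 := by
    intro θ
    have htel : ∑ j ∈ Finset.range k, (uS n (F (j + 1)) θ - uS n (F j) θ)
        = uS n (F k) θ - uS n (F 0) θ :=
      Finset.sum_range_sub (fun j => uS n (F j) θ) k
    calc (uS n (F k) θ - uS n (F 0) θ) ^ 2
        = (∑ j ∈ Finset.range k, (uS n (F (j + 1)) θ - uS n (F j) θ)) ^ 2 := by rw [htel]
      _ ≤ (Finset.range k).card * ∑ j ∈ Finset.range k,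
            (uS n (F (j + 1)) θ - uS n (F j) θ) ^ 2 := sq_sum_le_card_mul_sum_sq
      _ = (k : ℝ) * ∑ j ∈ Finset.range k,
            (uS n (F (j + 1)) θ - uS n (F j) θ) ^ 2 := by rw [Finset.card_range]
  calc W2 n (F k) (F 0)
      ≤ ∫ θ, (k : ℝ) * ∑ j ∈ Finset.range k,
          (uS n (F (j + 1)) θ - uS n (F j) θ) ^ 2 ∂(sphM n) :=
        MeasureTheory.integral_mono
          (integrable_sq_diff hr hrR (hF k le_rfl) (hF 0 (Nat.zero_le k))) hRHSint hpt
    _ = (k : ℝ) * ∑ j ∈ Finset.range k, W2 n (F (j + 1)) (F j) := by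
        rw [MeasureTheory.integral_const_mul,
          MeasureTheory.integral_finset_sum _ (fun j hj => hint j (Finset.mem_range.mp hj))]
        rfl

end RealSide

end DtilAux

/-- Triangle-like inequality for the pseudo-distance on `S_{r,R}`:
`d̃²(F_{k+1},F₁)/k ≤ C Σ_{j=1}^{k} d̃²(F_{j+1},F_j)` with `C = C(r,R,n)`. -/
theorem dtil_chain_inequality (n : ℕ) (r R : ℝ) (hr : 0 < r) (hrR : r < R) :
    ∃ C > 0, ∀ (k : ℕ) (F : ℕ → Set (EuclideanSpace ℝ (Fin n))),
      (∀ j ≤ k, MemSrR n r R (F j)) →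
      dtil n (F k) (F 0) ^ 2 / (k : ℝ) ≤
        C * ∑ j ∈ Finset.range k, dtil n (F (j + 1)) (F j) ^ 2 := by
  have hR0 : 0 < R := hr.trans hrR
  set m := Module.finrank ℝ (DtilAux.Esp n) - 1 with hm
  set CU := R ^ m / 2 with hCU
  set CL := (r / (r + 2 * (2 * R ^ 2 / r))) * (r ^ m / 2) with hCL
  have hCU0 : 0 < CU := by rw [hCU]; positivity
  have hCL0 : 0 < CL := by rw [hCL]; positivity
  refine ⟨CU / CL, by positivity, ?_⟩
  intro k F hF
  have hdtil : ∀ E G : Set (EuclideanSpace ℝ (Fin n)),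
      dtil n E G ^ 2 = DtilAux.D2 n E G := by
    intro E G
    have h : dtil n E G = Real.sqrt (DtilAux.D2 n E G) := rfl
    rw [h, Real.sq_sqrt (DtilAux.D2_nonneg n E G)]
  have hsum_nonneg : 0 ≤ ∑ j ∈ Finset.range k, dtil n (F (j + 1)) (F j) ^ 2 :=
    Finset.sum_nonneg fun j _ => sq_nonneg _
  rcases Nat.eq_zero_or_pos k with rfl | hk
  · simp
  rcases Nat.eq_zero_or_pos n with rfl | hn
  · have hvac : ∀ E : Set (EuclideanSpace ℝ (Fin 0)), MemSrR 0 r R E → E = Set.univ := by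
      intro E hE
      apply Set.eq_univ_of_forall
      intro x
      have hx0 : x = 0 := by ext i; exact i.elim0
      exact hE.1 (by rw [hx0]; exact Metric.mem_ball_self hr)
    have hz : dtil 0 (F k) (F 0) = 0 := by
      rw [dtil, hvac _ (hF k le_rfl), hvac _ (hF 0 (Nat.zero_le k)), symmDiff_self,
        Set.bot_eq_empty, Measure.restrict_empty, integral_zero_measure, Real.sqrt_zero]
    rw [hz]
    have h0 : (0:ℝ) ^ 2 / (k:ℝ) = 0 := by simp
    rw [h0]
    exact mul_nonneg (by positivity) hsum_nonneg
  · have hF' : ∀ j ≤ k, DtilAux.SrR n r R (F j) := fun j hj =>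
      ⟨(hF j hj).1, (hF j hj).2.1, (hF j hj).2.2⟩
    have hkpos : (0:ℝ) < (k:ℝ) := Nat.cast_pos.mpr hk
    have hW : ∀ j < k, DtilAux.W2 n (F (j + 1)) (F j) ≤ DtilAux.D2 n (F (j + 1)) (F j) / CL := by
      intro j hj
      rw [le_div_iff₀ hCL0, mul_comm]
      exact DtilAux.D2_ge hn hr hrR (hF' (j + 1) hj) (hF' j hj.le)
    have hchain : DtilAux.D2 n (F k) (F 0) ≤
        CU * ((k:ℝ) * ((∑ j ∈ Finset.range k, DtilAux.D2 n (F (j + 1)) (F j)) / CL)) := by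
      calc DtilAux.D2 n (F k) (F 0)
          ≤ CU * DtilAux.W2 n (F k) (F 0) :=
            DtilAux.D2_le hr hrR (hF' k le_rfl) (hF' 0 (Nat.zero_le k))
        _ ≤ CU * ((k:ℝ) * ∑ j ∈ Finset.range k, DtilAux.W2 n (F (j + 1)) (F j)) :=
            mul_le_mul_of_nonneg_left (DtilAux.W2_chain hr hrR k F hF') hCU0.le
        _ ≤ CU * ((k:ℝ) * ((∑ j ∈ Finset.range k, DtilAux.D2 n (F (j + 1)) (F j)) / CL)) := by
            rw [Finset.sum_div]
            refine mul_le_mul_of_nonneg_left (mul_le_mul_of_nonneg_left ?_ hkpos.le) hCU0.le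
            exact Finset.sum_le_sum fun j hj => hW j (Finset.mem_range.mp hj)
    have hSd : ∑ j ∈ Finset.range k, dtil n (F (j + 1)) (F j) ^ 2
        = ∑ j ∈ Finset.range k, DtilAux.D2 n (F (j + 1)) (F j) :=
      Finset.sum_congr rfl fun j _ => hdtil _ _
    rw [hdtil, hSd, div_le_iff₀ hkpos]
    calc DtilAux.D2 n (F k) (F 0)
        ≤ CU * ((k:ℝ) * ((∑ j ∈ Finset.range k, DtilAux.D2 n (F (j + 1)) (F j)) / CL)) := hchain
      _ = CU / CL * (∑ j ∈ Finset.range k, DtilAux.D2 n (F (j + 1)) (F j)) * (k:ℝ) := by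
          field_simp
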